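/- Let Q(z) = det(f(z)) be a holomorphic function on a disc with an isolated zero of multiplicity m ≥ 1 at z = 0, arising from a holomorphic matrix-valued function f : Δ → M_k(ℂ). Then there exist matrices f_t arbitrarily close to f (in the uniform norm on a smaller disc) such that det(f_t(z)) has only simple zeros near 0. -/

import Mathlib

open Metric Matrix

/-- Determinant expansion under a perturbation of the (0,0) entry. -/
private theorem det_expand_aux {n : ℕ} (A : Matrix (Fin (n+1)) (Fin (n+1)) ℂ) (t : ℂ) :
    (A + t • Matrix.single 0 0 1).det
      = A.det + t * (A.submatrix Fin.succ Fin.succ).det := by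
  have h1 : A + t • Matrix.single 0 0 1
      = A.updateCol 0 ((fun i => A i 0) + (t • (Pi.single 0 1 : Fin (n+1) → ℂ))) := by
    ext i j
    rcases eq_or_ne j 0 with rfl | hj
    · simp [Matrix.updateCol_apply, Matrix.single, Pi.single_apply, eq_comm]
    · simp only [Matrix.add_apply, Matrix.smul_apply, Matrix.single,
        Matrix.updateCol_apply, hj, if_false, Matrix.of_apply, smul_eq_mul]
      have : ¬(0 = i ∧ 0 = j) := fun h => hj h.2.symm
      simp [this]
  rw [h1, Matrix.det_updateCol_add, Matrix.updateCol_eq_self, Matrix.det_updateCol_smul]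
  congr 1
  rw [Matrix.det_succ_column_zero, Fintype.sum_eq_single (0 : Fin (n+1))]
  · rw [Fin.succAbove_zero]
    have h4 : ((A.updateCol 0 (Pi.single 0 1)).submatrix Fin.succ Fin.succ)
        = A.submatrix Fin.succ Fin.succ := by
      ext a b
      simp [Matrix.submatrix, Matrix.updateCol_apply, Fin.succ_ne_zero]
    rw [h4]
    simp [Matrix.updateCol_apply]
  · intro i hi
    simp [Matrix.updateCol_apply, Pi.single_apply, hi]

/-- The determinant of a holomorphic family of matrices is holomorphic. -/
private theorem det_diffOn_aux {n : ℕ} {s : Set ℂ} {f : ℂ → Matrix (Fin n) (Fin n) ℂ}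
    (hf : ∀ i j, DifferentiableOn ℂ (fun z => f z i j) s) :
    DifferentiableOn ℂ (fun z => (f z).det) s := by
  have : (fun z => (f z).det)
      = fun z => ∑ σ : Equiv.Perm (Fin n),
          (Equiv.Perm.sign σ : ℤ) * ∏ i, f z (σ i) i := by
    funext z; rw [Matrix.det_apply]
    congr 1; funext σ
    simp [Units.smul_def, zsmul_eq_mul]
  rw [this]
  apply DifferentiableOn.fun_sum
  intro σ _
  apply DifferentiableOn.const_mul
  apply DifferentiableOn.fun_finsetProd
  intro i _
  exact hf (σ i) i

/-- A holomorphic function which is not identically zero has finitely many zeros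
in a compact subset of the disc. -/
private theorem finite_zeros_aux {R : ℝ} {F : ℂ → ℂ} (hF : DifferentiableOn ℂ F (ball 0 R))
    {z₀ : ℂ} (hz₀ : z₀ ∈ ball (0:ℂ) R) (hne : F z₀ ≠ 0) {K : Set ℂ} (hK : IsCompact K)
    (hKR : K ⊆ ball (0:ℂ) R) : {z | z ∈ K ∧ F z = 0}.Finite := by
  by_contra hinf
  rw [← Set.not_infinite, not_not] at hinf
  obtain ⟨x, hxK, hx⟩ := hinf.exists_accPt_of_subset_isCompact hK (fun z hz => hz.1)
  rw [accPt_iff_frequently] at hx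
  have hfreq : ∃ᶠ z in nhdsWithin x {x}ᶜ, F z = 0 := by
    rw [Filter.frequently_iff] at hx ⊢
    intro U hU
    rw [mem_nhdsWithin] at hU
    obtain ⟨V, hV, hxV, hVU⟩ := hU
    obtain ⟨y, hy1, hy2⟩ := hx (hV.mem_nhds hxV)
    exact ⟨y, hVU ⟨hy1, hy2.1⟩, hy2.2.2⟩
  have := (hF.analyticOnNhd isOpen_ball).eqOn_zero_of_preconnected_of_frequently_eq_zero
    (convex_ball (0:ℂ) R).isPreconnected (hKR hxK) hfreq
  exact hne (this hz₀)

/-- The set of `μ` for which `A + μ • 1` is singular is finite. -/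
private theorem finite_bad_mu {q : ℕ} (A : Matrix (Fin q) (Fin q) ℂ) :
    {μ : ℂ | (A + μ • 1).det = 0}.Finite := by
  apply Set.Finite.subset ((A.finite_spectrum).image Neg.neg)
  intro μ hμ
  simp only [Set.mem_setOf_eq] at hμ
  refine ⟨-μ, ?_, neg_neg μ⟩
  rw [spectrum.mem_iff]
  intro hU
  rw [Matrix.isUnit_iff_isUnit_det] at hU
  have hEq : (algebraMap ℂ (Matrix (Fin q) (Fin q) ℂ) (-μ) - A) = -(A + μ • 1) := by
    rw [Algebra.algebraMap_eq_smul_one, neg_smul]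
    abel
  rw [hEq, Matrix.det_neg, hμ, mul_zero] at hU
  exact hU.ne_zero rfl

/-- Choose a small positive real avoiding a finite set of complex numbers. -/
private theorem exists_small_real (B : Set ℂ) (hB : B.Finite) (δ : ℝ) (hδ : 0 < δ) :
    ∃ t : ℝ, 0 < t ∧ t < δ ∧ (t:ℂ) ∉ B := by
  have h1 : (Set.Ioo (0:ℝ) δ).Infinite := Set.Ioo_infinite hδ
  have h2 : {x : ℝ | (x:ℂ) ∈ B}.Finite := hB.preimage Complex.ofReal_injective.injOn
  obtain ⟨t, ht⟩ := (h1.diff h2).nonempty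
  exact ⟨t, ht.1.1, ht.1.2, ht.2⟩

/-- Main induction: a holomorphic matrix family whose determinant is not identically zero
can be perturbed a little so that its determinant has only simple zeros in a smaller disc. -/
private theorem aux_perturb (n : ℕ) : ∀ (R : ℝ), 0 < R →
    ∀ (f : ℂ → Matrix (Fin n) (Fin n) ℂ),
    (∀ i j, DifferentiableOn ℂ (fun z => f z i j) (ball (0:ℂ) R)) →
    (∃ z₀ ∈ ball (0:ℂ) R, (f z₀).det ≠ 0) →
    ∀ ε : ℝ, 0 < ε → ∀ r : ℝ, r ∈ Set.Ioo 0 R →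
    ∃ g : ℂ → Matrix (Fin n) (Fin n) ℂ,
      (∀ i j, DifferentiableOn ℂ (fun z => g z i j) (ball (0:ℂ) R)) ∧
      (∀ z ∈ closedBall (0:ℂ) r, ∀ i j, ‖g z i j - f z i j‖ ≤ ε) ∧
      (∀ z ∈ ball (0:ℂ) r, (g z).det = 0 → deriv (fun w => (g w).det) z ≠ 0) := by
  induction n with
  | zero =>
    intro R hR f hf _ ε hε r hr
    refine ⟨f, hf, fun z _ i _ => i.elim0, fun z hz h0 => ?_⟩
    simp [Matrix.det_fin_zero] at h0
  | succ n ih =>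
    intro R hR f hf hfne ε hε r hr
    obtain ⟨z₀, hz₀R, hz₀⟩ := hfne
    obtain ⟨hr0, hrR⟩ := hr
    set r' : ℝ := (r + R) / 2 with hr'def
    have hrr' : r < r' := by simp only [hr'def]; linarith
    have hr'R : r' < R := by simp only [hr'def]; linarith
    have hr'0 : 0 < r' := lt_trans hr0 hrr'
    -- the auxiliary constant matrix E
    set E : Matrix (Fin (n+1)) (Fin (n+1)) ℂ :=
      (1 : Matrix (Fin (n+1)) (Fin (n+1)) ℂ) - Matrix.single 0 0 1 with hEdef
    have hEsub : E.submatrix Fin.succ Fin.succ = (1 : Matrix (Fin n) (Fin n) ℂ) := by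
      ext a b
      have h1 : ¬((0 : Fin (n+1)) = a.succ ∧ (0 : Fin (n+1)) = b.succ) :=
        fun hcc => (Fin.succ_ne_zero a) hcc.1.symm
      simp only [hEdef, Matrix.submatrix_apply, Matrix.sub_apply, Matrix.one_apply,
        Matrix.single, Matrix.of_apply, if_neg h1, sub_zero, Fin.succ_inj]
    have hEbound : ∀ i j, ‖E i j‖ ≤ 1 := by
      intro i j
      simp only [hEdef, Matrix.sub_apply, Matrix.one_apply, Matrix.single,
        Matrix.of_apply]
      split_ifs <;> simp
    -- Stage 1 : choose μ
    have hcont1 : Continuous fun μ : ℂ => (f z₀ + μ • E).det :=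
      (continuous_const.add (continuous_id.smul continuous_const)).matrix_det
    have hopen1 : IsOpen {μ : ℂ | (f z₀ + μ • E).det ≠ 0} :=
      isOpen_compl_singleton.preimage hcont1
    have h01 : (0:ℂ) ∈ {μ : ℂ | (f z₀ + μ • E).det ≠ 0} := by
      simpa using hz₀
    obtain ⟨δ₁, hδ₁, hball1⟩ := Metric.isOpen_iff.mp hopen1 0 h01
    obtain ⟨μ, hμ0, hμδ, hμB⟩ := exists_small_real _
      (finite_bad_mu ((f 0).submatrix Fin.succ Fin.succ)) (min δ₁ (ε/3))
      (lt_min hδ₁ (by linarith))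
    set f₁ : ℂ → Matrix (Fin (n+1)) (Fin (n+1)) ℂ := fun z => f z + (μ:ℂ) • E with hf₁def
    have hf₁ : ∀ i j, DifferentiableOn ℂ (fun z => f₁ z i j) (ball (0:ℂ) R) := by
      intro i j
      simpa [hf₁def] using (hf i j).add_const ((μ:ℂ) • E i j)
    have hdet₁ : (f₁ z₀).det ≠ 0 := by
      have : (μ:ℂ) ∈ ball (0:ℂ) δ₁ := by
        simp only [mem_ball_zero_iff, Complex.norm_real, Real.norm_eq_abs,
          abs_of_pos hμ0]
        exact lt_of_lt_of_le hμδ (min_le_left _ _)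
      exact hball1 this
    have hminor₁ : ∀ z, (f₁ z).submatrix Fin.succ Fin.succ
        = (f z).submatrix Fin.succ Fin.succ + (μ:ℂ) • (1 : Matrix (Fin n) (Fin n) ℂ) := by
      intro z
      have : ((μ:ℂ) • E).submatrix Fin.succ Fin.succ
          = (μ:ℂ) • (1 : Matrix (Fin n) (Fin n) ℂ) := by
        rw [← hEsub]; rfl
      rw [hf₁def]
      ext a b
      simp only [Matrix.submatrix_apply, Matrix.add_apply]
      have h2 := congrFun (congrFun this a) b
      simp only [Matrix.submatrix_apply] at h2
      simp [h2]
    have hminor₁ne : ((f₁ 0).submatrix Fin.succ Fin.succ).det ≠ 0 := by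
      rw [hminor₁ 0]
      exact hμB
    -- Stage 2 : apply the induction hypothesis to the (0,0) minor of f₁
    obtain ⟨gm, hgm_diff, hgm_close, hgm_simple⟩ := ih R hR
      (fun z => (f₁ z).submatrix Fin.succ Fin.succ)
      (fun i j => hf₁ i.succ j.succ)
      ⟨0, mem_ball_self hR, hminor₁ne⟩
      (ε/3) (by linarith) r' ⟨hr'0, hr'R⟩
    -- assemble f₂
    set f₂ : ℂ → Matrix (Fin (n+1)) (Fin (n+1)) ℂ := fun z => Matrix.of fun i j =>
      if h1 : i = 0 then f₁ z i j else if h2 : j = 0 then f₁ z i j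
        else gm z (i.pred h1) (j.pred h2) with hf₂def
    have hf₂sub : ∀ z, (f₂ z).submatrix Fin.succ Fin.succ = gm z := by
      intro z
      ext a b
      simp [hf₂def, Matrix.submatrix_apply, Fin.succ_ne_zero, Fin.pred_succ]
    have hf₂diff : ∀ i j, DifferentiableOn ℂ (fun z => f₂ z i j) (ball (0:ℂ) R) := by
      intro i j
      by_cases h1 : i = 0
      · simpa [hf₂def, h1] using hf₁ i j
      · by_cases h2 : j = 0
        · simpa [hf₂def, h1, h2] using hf₁ i j
        · simpa [hf₂def, h1, h2] using hgm_diff (i.pred h1) (j.pred h2)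
    have hf₂close : ∀ z ∈ closedBall (0:ℂ) r', ∀ i j,
        ‖f₂ z i j - f₁ z i j‖ ≤ ε/3 := by
      intro z hz i j
      by_cases h1 : i = 0
      · simp [hf₂def, h1]; linarith
      · by_cases h2 : j = 0
        · simp [hf₂def, h1, h2]; linarith
        · have := hgm_close z hz (i.pred h1) (j.pred h2)
          simp only [Matrix.submatrix_apply, Fin.succ_pred] at this
          simpa [hf₂def, h1, h2] using this
    -- the two determinant functions
    set Q : ℂ → ℂ := fun z => (f₂ z).det with hQdef
    set C : ℂ → ℂ := fun z => (gm z).det with hCdef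
    have hQd : DifferentiableOn ℂ Q (ball (0:ℂ) R) := det_diffOn_aux hf₂diff
    have hCd : DifferentiableOn ℂ C (ball (0:ℂ) R) := det_diffOn_aux hgm_diff
    have keyg : ∀ t : ℂ, ∀ z, ((f₂ z) + t • Matrix.single 0 0 1).det
        = Q z + t * C z := by
      intro t z
      rw [det_expand_aux, hf₂sub]
    have hball_rR : ball (0:ℂ) r ⊆ ball (0:ℂ) R := ball_subset_ball (by linarith)
    have hball_rr' : ball (0:ℂ) r ⊆ ball (0:ℂ) r' := ball_subset_ball (by linarith)
    have hball_r'R : ball (0:ℂ) r' ⊆ ball (0:ℂ) R := ball_subset_ball (by linarith)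
    have hderiv : ∀ (t : ℂ), ∀ z ∈ ball (0:ℂ) R,
        deriv (fun w => ((f₂ w) + t • Matrix.single 0 0 1).det) z
          = deriv Q z + t * deriv C z := by
      intro t z hz
      have e1 : (fun w => ((f₂ w) + t • Matrix.single 0 0 1).det)
          = fun w => Q w + t * C w := funext (keyg t)
      rw [e1]
      have dQ := hQd.differentiableAt (isOpen_ball.mem_nhds hz)
      have dC := hCd.differentiableAt (isOpen_ball.mem_nhds hz)
      rw [deriv_fun_add dQ (dC.const_mul t), deriv_const_mul t dC]
    -- C is not identically zero on ball r'
    have hCne : ∃ w₀ ∈ ball (0:ℂ) r', C w₀ ≠ 0 := by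
      by_contra hcon
      push_neg at hcon
      have h0m : (0:ℂ) ∈ ball (0:ℂ) r' := mem_ball_self hr'0
      have hder := hgm_simple 0 h0m (hcon 0 h0m)
      have hev : C =ᶠ[nhds (0:ℂ)] (fun _ : ℂ => (0:ℂ)) := by
        filter_upwards [isOpen_ball.mem_nhds h0m] with w hw
        exact hcon w hw
      have : deriv C 0 = deriv (fun _ : ℂ => (0:ℂ)) 0 := hev.deriv_eq
      rw [deriv_const] at this
      exact hder this
    -- closeness of the final matrix
    have hclose_total : ∀ t : ℝ, 0 < t → t < ε/3 →
        ∀ z ∈ closedBall (0:ℂ) r, ∀ i j,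
        ‖(f₂ z + (t:ℂ) • Matrix.single 0 0 1
          : Matrix (Fin (n+1)) (Fin (n+1)) ℂ) i j - f z i j‖ ≤ ε := by
      intro t ht0 htε z hz i j
      have hz' : z ∈ closedBall (0:ℂ) r' := closedBall_subset_closedBall (by linarith) hz
      have e1 : (f₂ z + (t:ℂ) • Matrix.single 0 0 1
          : Matrix (Fin (n+1)) (Fin (n+1)) ℂ) i j - f z i j
          = (t:ℂ) * Matrix.single 0 0 1 i j + (f₂ z i j - f₁ z i j)
            + (μ:ℂ) * E i j := by
        simp only [Matrix.add_apply, Matrix.smul_apply, smul_eq_mul, hf₁def]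
        ring
      rw [e1]
      have b1 : ‖(t:ℂ) * Matrix.single 0 0 1 i j‖ ≤ ε/3 := by
        rw [norm_mul]
        have hstd : ‖Matrix.single 0 0 (1:ℂ) i j‖ ≤ 1 := by
          simp only [Matrix.single, Matrix.of_apply]
          split_ifs <;> simp
        calc ‖(t:ℂ)‖ * ‖Matrix.single 0 0 (1:ℂ) i j‖
            ≤ ‖(t:ℂ)‖ * 1 := by
              apply mul_le_mul_of_nonneg_left hstd (norm_nonneg _)
          _ = |t| := by simp [Complex.norm_real]
          _ ≤ ε/3 := by rw [abs_of_pos ht0]; linarith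
      have b2 : ‖f₂ z i j - f₁ z i j‖ ≤ ε/3 := hf₂close z hz' i j
      have b3 : ‖(μ:ℂ) * E i j‖ ≤ ε/3 := by
        rw [norm_mul]
        calc ‖(μ:ℂ)‖ * ‖E i j‖
            ≤ ‖(μ:ℂ)‖ * 1 := by
              apply mul_le_mul_of_nonneg_left (hEbound i j) (norm_nonneg _)
          _ = |μ| := by simp [Complex.norm_real]
          _ ≤ ε/3 := by
              rw [abs_of_pos hμ0]
              exact le_trans (le_of_lt hμδ) (min_le_right _ _)
      calc ‖(t:ℂ) * Matrix.single 0 0 1 i j + (f₂ z i j - f₁ z i j)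
              + (μ:ℂ) * E i j‖
          ≤ ‖(t:ℂ) * Matrix.single 0 0 1 i j + (f₂ z i j - f₁ z i j)‖
            + ‖(μ:ℂ) * E i j‖ := norm_add_le _ _
        _ ≤ (‖(t:ℂ) * Matrix.single 0 0 1 i j‖
            + ‖f₂ z i j - f₁ z i j‖) + ‖(μ:ℂ) * E i j‖ := by
              gcongr
              exact norm_add_le _ _
        _ ≤ ε/3 + ε/3 + ε/3 := by gcongr
        _ = ε := by ring
    -- case split on the Wronskian
    set W : ℂ → ℂ := fun z => Q z * deriv C z - deriv Q z * C z with hWdef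
    have hQan : AnalyticOnNhd ℂ Q (ball (0:ℂ) R) := hQd.analyticOnNhd isOpen_ball
    have hCan : AnalyticOnNhd ℂ C (ball (0:ℂ) R) := hCd.analyticOnNhd isOpen_ball
    have hdQd : DifferentiableOn ℂ (deriv Q) (ball (0:ℂ) R) :=
      (hQan.deriv_of_isOpen isOpen_ball).differentiableOn
    have hdCd : DifferentiableOn ℂ (deriv C) (ball (0:ℂ) R) :=
      (hCan.deriv_of_isOpen isOpen_ball).differentiableOn
    have hWd : DifferentiableOn ℂ W (ball (0:ℂ) R) :=
      (hQd.mul hdCd).sub (hdQd.mul hCd)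
    by_cases hW : ∀ z ∈ ball (0:ℂ) R, W z = 0
    · -- degenerate case : Q = λ • C
      obtain ⟨w₀, hw₀r', hCw₀⟩ := hCne
      have hw₀R : w₀ ∈ ball (0:ℂ) R := hball_r'R hw₀r'
      set lam : ℂ := Q w₀ / C w₀ with hlamdef
      -- find a small ball around w₀ where C ≠ 0
      have hCcont : ContinuousAt C w₀ :=
        (hCd.differentiableAt (isOpen_ball.mem_nhds hw₀R)).continuousAt
      have hev : ∀ᶠ y in nhds w₀, C y ≠ 0 := hCcont.eventually_ne hCw₀
      obtain ⟨ρ₁, hρ₁, hρball⟩ := Metric.eventually_nhds_iff.mp hev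
      set ρ : ℝ := min ρ₁ (R - dist w₀ 0) with hρdef
      have hρ0 : 0 < ρ := lt_min hρ₁ (by simpa [sub_pos] using mem_ball.mp hw₀R)
      have hsubR : ball w₀ ρ ⊆ ball (0:ℂ) R := by
        intro x hx
        rw [mem_ball] at hx ⊢
        calc dist x 0 ≤ dist x w₀ + dist w₀ 0 := dist_triangle _ _ _
          _ < ρ + dist w₀ 0 := by linarith
          _ ≤ R := by
              have := min_le_right ρ₁ (R - dist w₀ 0)
              simp only [hρdef] at *
              linarith
      have hCne' : ∀ x ∈ ball w₀ ρ, C x ≠ 0 := by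
        intro x hx
        exact hρball (lt_of_lt_of_le (mem_ball.mp hx) (min_le_left _ _))
      -- φ = (Q - lam*C)/C has zero derivative on ball w₀ ρ
      set φ : ℂ → ℂ := fun z => (Q z - lam * C z) / C z with hφdef
      have hGd : DifferentiableOn ℂ (fun z => Q z - lam * C z) (ball (0:ℂ) R) :=
        hQd.sub (hCd.const_mul lam)
      have hφdiff : DifferentiableOn ℂ φ (ball w₀ ρ) :=
        (hGd.mono hsubR).div (hCd.mono hsubR) hCne'
      have hφderiv : ∀ x ∈ ball w₀ ρ, fderivWithin ℂ φ (ball w₀ ρ) x = 0 := by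
        intro x hx
        have hxR : x ∈ ball (0:ℂ) R := hsubR hx
        have hQa : HasDerivAt Q (deriv Q x) x :=
          (hQd.differentiableAt (isOpen_ball.mem_nhds hxR)).hasDerivAt
        have hCa : HasDerivAt C (deriv C x) x :=
          (hCd.differentiableAt (isOpen_ball.mem_nhds hxR)).hasDerivAt
        have hGa : HasDerivAt (fun z => Q z - lam * C z)
            (deriv Q x - lam * deriv C x) x := hQa.sub (hCa.const_mul lam)
        have hWx : Q x * deriv C x - deriv Q x * C x = 0 := hW x hxR
        have hval : ((deriv Q x - lam * deriv C x) * C x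
            - (Q x - lam * C x) * deriv C x) / C x ^ 2 = 0 := by
          have hnum : (deriv Q x - lam * deriv C x) * C x
              - (Q x - lam * C x) * deriv C x = 0 := by linear_combination -hWx
          rw [hnum, zero_div]
        have hφa : HasDerivAt φ 0 x := by
          have := hGa.div hCa (hCne' x hx)
          rwa [hval] at this
        have := hφa.hasFDerivAt.hasFDerivWithinAt.fderivWithin
          (isOpen_ball.uniqueDiffWithinAt hx)
        rw [this]
        ext v
        simp
      have hφconst : ∀ x ∈ ball w₀ ρ, φ x = φ w₀ :=
        fun x hx => (convex_ball w₀ ρ).is_const_of_fderivWithin_eq_zero hφdiff hφderiv hx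
          (mem_ball_self hρ0)
      have hφw₀ : φ w₀ = 0 := by
        simp only [hφdef, hlamdef]
        field_simp
        ring
      have hGzero : ∀ x ∈ ball w₀ ρ, Q x - lam * C x = 0 := by
        intro x hx
        have h1 := hφconst x hx
        rw [hφw₀] at h1
        have := hCne' x hx
        simp only [hφdef, div_eq_zero_iff, this, or_false] at h1
        exact h1
      -- identity theorem : Q = lam * C on ball R
      have hfreq : ∃ᶠ z in nhdsWithin w₀ {w₀}ᶜ, Q z - lam * C z = 0 := by
        apply Filter.Eventually.frequently
        apply Filter.eventually_iff_exists_mem.mpr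
        exact ⟨ball w₀ ρ ∩ {w₀}ᶜ, Filter.inter_mem
          (nhdsWithin_le_nhds (isOpen_ball.mem_nhds (mem_ball_self hρ0)))
          self_mem_nhdsWithin, fun y hy => hGzero y hy.1⟩
      have hkey : ∀ z ∈ ball (0:ℂ) R, Q z = lam * C z := by
        have := (hGd.analyticOnNhd isOpen_ball).eqOn_zero_of_preconnected_of_frequently_eq_zero
          (convex_ball (0:ℂ) R).isPreconnected hw₀R hfreq
        intro z hz
        have h2 := this hz
        simp only [Pi.zero_apply] at h2
        linear_combination h2
      -- choose t
      obtain ⟨t, ht0, htε, htB⟩ := exists_small_real {-lam} (Set.finite_singleton _)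
        (ε/3) (by linarith)
      have hlamt : lam + (t:ℂ) ≠ 0 := by
        intro hcon2
        apply htB
        simp only [Set.mem_singleton_iff]
        linear_combination hcon2
      refine ⟨fun w => f₂ w + (t:ℂ) • Matrix.single 0 0 1, ?_, ?_, ?_⟩
      · intro i j
        simpa using (hf₂diff i j).add_const ((t:ℂ) • Matrix.single 0 0 1 i j)
      · intro z hz i j
        exact hclose_total t ht0 htε z hz i j
      · intro z hz hdet
        have hzR : z ∈ ball (0:ℂ) R := hball_rR hz
        have hzr' : z ∈ ball (0:ℂ) r' := hball_rr' hz
        have hQz : Q z = lam * C z := hkey z hzR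
        have hdet' : (lam + (t:ℂ)) * C z = 0 := by
          have := keyg (t:ℂ) z
          rw [this] at hdet
          rw [hQz] at hdet
          linear_combination hdet
        have hCz : C z = 0 := by
          rcases mul_eq_zero.mp hdet' with h | h
          · exact absurd h hlamt
          · exact h
        have hdC : deriv C z ≠ 0 := hgm_simple z hzr' hCz
        rw [hderiv (t:ℂ) z hzR]
        have hev2 : Q =ᶠ[nhds z] (fun w => lam * C w) := by
          filter_upwards [isOpen_ball.mem_nhds hzR] with w hw
          exact hkey w hw
        rw [hev2.deriv_eq, deriv_const_mul lam
          (hCd.differentiableAt (isOpen_ball.mem_nhds hzR))]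
        intro hcon
        apply hlamt
        apply mul_left_cancel₀ hdC
        rw [mul_zero]
        linear_combination hcon
    · -- nondegenerate case
      push_neg at hW
      obtain ⟨zw, hzwR, hzw⟩ := hW
      have hZfin : {z | z ∈ closedBall (0:ℂ) r ∧ W z = 0}.Finite :=
        finite_zeros_aux hWd hzwR hzw (isCompact_closedBall _ _)
          (closedBall_subset_ball (by linarith))
      set B : Set ℂ := (fun z => if C z ≠ 0 then -Q z / C z
        else -(deriv Q z)/(deriv C z)) '' {z | z ∈ closedBall (0:ℂ) r ∧ W z = 0} with hBdef
      have hBfin : B.Finite := hZfin.image _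
      obtain ⟨t, ht0, htε, htB⟩ := exists_small_real B hBfin (ε/3) (by linarith)
      refine ⟨fun w => f₂ w + (t:ℂ) • Matrix.single 0 0 1, ?_, ?_, ?_⟩
      · intro i j
        simpa using (hf₂diff i j).add_const ((t:ℂ) • Matrix.single 0 0 1 i j)
      · intro z hz i j
        exact hclose_total t ht0 htε z hz i j
      · intro z hz hdet
        intro hcon
        have hzR : z ∈ ball (0:ℂ) R := hball_rR hz
        have hzr' : z ∈ ball (0:ℂ) r' := hball_rr' hz
        rw [keyg (t:ℂ) z] at hdet
        rw [hderiv (t:ℂ) z hzR] at hcon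
        have hWz : W z = 0 := by
          simp only [hWdef]
          have h1 : Q z = -(t:ℂ) * C z := by linear_combination hdet
          have h2 : deriv Q z = -(t:ℂ) * deriv C z := by linear_combination hcon
          rw [h1, h2]; ring
        have hzZ : z ∈ {z | z ∈ closedBall (0:ℂ) r ∧ W z = 0} :=
          ⟨ball_subset_closedBall hz, hWz⟩
        apply htB
        rw [hBdef]
        by_cases hCz : C z ≠ 0
        · have : (t:ℂ) = -Q z / C z := by
            rw [eq_div_iff hCz]
            linear_combination hdet
          rw [this]
          exact ⟨z, hzZ, by simp [hCz]⟩
        · push_neg at hCz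
          have hdC : deriv C z ≠ 0 := hgm_simple z hzr' hCz
          have : (t:ℂ) = -(deriv Q z) / (deriv C z) := by
            rw [eq_div_iff hdC]
            linear_combination hcon
          rw [this]
          refine ⟨z, hzZ, by simp [hCz]⟩

/-- Perturbing a holomorphic matrix family to make the zeros of its determinant
simple.  Let `f : Δ → M_k(ℂ)` be holomorphic on the disc `ball 0 R` with
`Q(z) = det (f z)` having a zero of multiplicity `m ≥ 1` at `z = 0` (i.e.
`Q z = z^m · h z` with `h` holomorphic, `h 0 ≠ 0`).  Then on any smaller disc
there exist holomorphic matrix families uniformly arbitrarily close to `f` whose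
determinants have only simple zeros. -/
theorem perturb_det_to_simple_zeros
    (k : ℕ) (R : ℝ) (hR : 0 < R) (f : ℂ → Matrix (Fin k) (Fin k) ℂ)
    (hf : ∀ i j, DifferentiableOn ℂ (fun z => f z i j) (ball (0 : ℂ) R))
    (m : ℕ) (hm : 1 ≤ m) (h : ℂ → ℂ)
    (hh : DifferentiableOn ℂ h (ball (0 : ℂ) R)) (hh0 : h 0 ≠ 0)
    (hQ : ∀ z ∈ ball (0 : ℂ) R, (f z).det = z ^ m * h z) :
    ∀ ε > 0, ∀ r ∈ Set.Ioo 0 R, ∃ g : ℂ → Matrix (Fin k) (Fin k) ℂ,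
      (∀ i j, DifferentiableOn ℂ (fun z => g z i j) (ball (0 : ℂ) r)) ∧
      (∀ z ∈ ball (0 : ℂ) r, ∀ i j, ‖g z i j - f z i j‖ ≤ ε) ∧
      ∀ z ∈ ball (0 : ℂ) r, (g z).det = 0 →
        deriv (fun w => (g w).det) z ≠ 0 := by
  intro ε hε r hr
  -- find a point where det f ≠ 0
  have hcont : ContinuousAt h 0 :=
    (hh.differentiableAt (isOpen_ball.mem_nhds (mem_ball_self hR))).continuousAt
  have hev : ∀ᶠ y in nhds (0:ℂ), h y ≠ 0 := hcont.eventually_ne hh0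
  obtain ⟨δ, hδ, hδball⟩ := Metric.eventually_nhds_iff.mp hev
  set x₀ : ℝ := min δ R / 2 with hx₀def
  have hmin : 0 < min δ R := lt_min hδ hR
  have hx₀pos : 0 < x₀ := half_pos hmin
  have hx₀ltδ : x₀ < δ := lt_of_lt_of_le (half_lt_self hmin) (min_le_left _ _)
  have hx₀ltR : x₀ < R := lt_of_lt_of_le (half_lt_self hmin) (min_le_right _ _)
  have hx₀δ : (x₀:ℂ) ∈ ball (0:ℂ) δ := by
    rw [mem_ball_zero_iff]
    simp only [Complex.norm_real, Real.norm_eq_abs]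
    rw [abs_of_pos hx₀pos]
    exact hx₀ltδ
  have hx₀R : (x₀:ℂ) ∈ ball (0:ℂ) R := by
    rw [mem_ball_zero_iff]
    simp only [Complex.norm_real, Real.norm_eq_abs]
    rw [abs_of_pos hx₀pos]
    exact hx₀ltR
  have hz₀ : (f (x₀:ℂ)).det ≠ 0 := by
    rw [hQ _ hx₀R]
    apply mul_ne_zero
    · apply pow_ne_zero
      simpa using ne_of_gt hx₀pos
    · apply hδball
      rw [mem_ball_zero_iff] at hx₀δ
      simpa using hx₀δ
  obtain ⟨g, hg1, hg2, hg3⟩ := aux_perturb k R hR f hf ⟨(x₀:ℂ), hx₀R, hz₀⟩ ε hε r hr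
  refine ⟨g, ?_, ?_, hg3⟩
  · intro i j
    exact (hg1 i j).mono (ball_subset_ball hr.2.le)
  · intro z hz i j
    exact hg2 z (ball_subset_closedBall hz) i j
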